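/- Projection onto the probability simplex via soft thresholding: for y ∈ ℝ^k, let μ be y sorted in decreasing order, J = max{ j ∈ {1,…,k} : μ_j - (1/j)(Σ_{r=1}^j μ_r - 1) > 0 }, and β = (1/J)(Σ_{i=1}^J μ_i - 1). Then the vector ŷ with ŷ_i = max{y_i - β, 0} is the Euclidean projection of y onto the simplex Δ_k = {x ∈ ℝ^k : x ≥ 0, Σ_i x_i = 1}, i.e., ŷ = argmin_{x ∈ Δ_k} ‖x - y‖_2². -/

import Mathlib

open Finset

/-- Projection onto the probability simplex via soft thresholding: with μ the
decreasing sort of y, J the largest index j with μ_j - (1/j)(Σ_{r≤j} μ_r - 1) > 0,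
and β = (1/J)(Σ_{i≤J} μ_i - 1), the vector ŷ_i = max(y_i - β, 0) is the Euclidean
projection of y onto the simplex. -/
theorem simplex_projection_soft_threshold
    (k : ℕ) (hk : 1 ≤ k) (y : Fin k → ℝ)
    -- μ, indexed on {1,…,k}, lists the entries of y in decreasing order
    (μ : ℕ → ℝ) (σ : Equiv.Perm (Fin k))
    (hsort : ∀ i : Fin k, μ ((i : ℕ) + 1) = y (σ i))
    (hmono : ∀ i j : ℕ, 1 ≤ i → i ≤ j → j ≤ k → μ j ≤ μ i)
    (J : ℕ)
    (hJ : IsGreatest {j : ℕ | 1 ≤ j ∧ j ≤ k ∧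
      0 < μ j - (1 / (j : ℝ)) * ((∑ r ∈ Finset.Icc 1 j, μ r) - 1)} J)
    (β : ℝ) (hβ : β = (1 / (J : ℝ)) * ((∑ i ∈ Finset.Icc 1 J, μ i) - 1)) :
    (fun i : Fin k => max (y i - β) 0) ∈ stdSimplex ℝ (Fin k) ∧
    ∀ x ∈ stdSimplex ℝ (Fin k),
      ∑ i, (max (y i - β) 0 - y i) ^ 2 ≤ ∑ i, (x i - y i) ^ 2 := by
  obtain ⟨⟨hJ1, hJk, hJpos⟩, hJmax⟩ := hJ
  have hJ0 : (0:ℝ) < (J:ℝ) := by exact_mod_cast Nat.pos_of_ne_zero (by omega)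
  have hJβ : (J:ℝ) * β = (∑ i ∈ Finset.Icc 1 J, μ i) - 1 := by
    rw [hβ]; field_simp
  have hμJβ : β < μ J := by rw [hβ]; linarith [hJpos]
  have hpos : ∀ j, 1 ≤ j → j ≤ J → β < μ j := fun j h1 h2 =>
    lt_of_lt_of_le hμJβ (hmono j J h1 h2 hJk)
  have hneg : ∀ j, J < j → j ≤ k → μ j ≤ β := by
    intro j hj hjk
    have h1 : μ (J + 1) ≤ β := by
      have hnot : ¬ (0 < μ (J+1) - (1 / ((J+1 : ℕ) : ℝ)) *
          ((∑ r ∈ Finset.Icc 1 (J+1), μ r) - 1)) := by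
        intro h
        have := hJmax ⟨by omega, by omega, h⟩
        omega
      push_neg at hnot
      have hSsucc : (∑ r ∈ Finset.Icc 1 (J+1), μ r)
          = (∑ r ∈ Finset.Icc 1 J, μ r) + μ (J+1) :=
        Finset.sum_Icc_succ_top (by omega) μ
      have hc : (0:ℝ) < ((J:ℝ) + 1) := by positivity
      have hcast : (((J+1 : ℕ)) : ℝ) = (J:ℝ) + 1 := by push_cast; ring
      rw [hcast] at hnot
      have h2' : μ (J+1) ≤ ((∑ r ∈ Finset.Icc 1 (J+1), μ r) - 1) / ((J:ℝ) + 1) := by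
        rw [one_div_mul_eq_div] at hnot
        linarith
      have h2 : μ (J+1) * ((J:ℝ) + 1) ≤ (∑ r ∈ Finset.Icc 1 (J+1), μ r) - 1 :=
        (le_div_iff₀ hc).mp h2'
      have h3 : (J:ℝ) * μ (J+1) ≤ (J:ℝ) * β := by
        rw [hSsucc] at h2; linarith [hJβ]
      exact (mul_le_mul_iff_right₀ hJ0).mp h3
    calc μ j ≤ μ (J+1) := hmono _ _ (by omega) (by omega) hjk
    _ ≤ β := h1
  have hsum : ∀ g : ℝ → ℝ, ∑ i : Fin k, g (y i) = ∑ j ∈ Finset.Icc 1 k, g (μ j) := by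
    intro g
    rw [← Equiv.sum_comp σ (fun i => g (y i))]
    have : ∀ i : Fin k, g (y (σ i)) = g (μ ((i : ℕ) + 1)) := fun i => by rw [← hsort]
    rw [Finset.sum_congr rfl (fun i _ => this i),
      Fin.sum_univ_eq_sum_range (fun i => g (μ (i + 1))),
      show Finset.Icc 1 k = Finset.Ico 1 (k+1) by rw [Finset.Ico_add_one_right_eq_Icc],
      Finset.sum_Ico_eq_sum_range]
    simp [add_comm]
  have hsum1 : ∑ i : Fin k, max (y i - β) 0 = 1 := by
    rw [hsum (fun t => max (t - β) 0)]
    have hIcc : ∀ n : ℕ, Finset.Icc 1 n = Finset.Ioc 0 n := fun n => by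
      rw [← Finset.Icc_add_one_left_eq_Ioc]; rfl
    rw [hIcc k, ← Finset.sum_Ioc_consecutive _ (Nat.zero_le J) hJk, ← hIcc J]
    have e1 : ∑ j ∈ Finset.Icc 1 J, max (μ j - β) 0 = ∑ j ∈ Finset.Icc 1 J, (μ j - β) := by
      refine Finset.sum_congr rfl fun j hj => ?_
      rw [Finset.mem_Icc] at hj
      exact max_eq_left (by linarith [hpos j hj.1 hj.2])
    have e2 : ∑ j ∈ Finset.Ioc J k, max (μ j - β) 0 = 0 := by
      refine Finset.sum_eq_zero fun j hj => ?_
      rw [Finset.mem_Ioc] at hj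
      exact max_eq_right (by linarith [hneg j hj.1 hj.2])
    rw [e1, e2, Finset.sum_sub_distrib, Finset.sum_const, Nat.card_Icc]
    simp only [Nat.add_sub_cancel, nsmul_eq_mul]
    linarith [hJβ]
  constructor
  · exact ⟨fun i => le_max_right _ _, hsum1⟩
  · intro x hx
    obtain ⟨hx0, hx1⟩ := hx
    have key : ∀ i : Fin k, -β * (x i - max (y i - β) 0) ≤
        (x i - max (y i - β) 0) * (max (y i - β) 0 - y i) := by
      intro i
      rcases le_or_gt β (y i) with h | h
      · rw [max_eq_left (by linarith)]
        exact le_of_eq (by ring)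
      · rw [max_eq_right (by linarith)]
        nlinarith [hx0 i]
    have hsum2 : (0:ℝ) ≤ ∑ i, (x i - max (y i - β) 0) * (max (y i - β) 0 - y i) := by
      have h1 : ∑ i, -β * (x i - max (y i - β) 0) = 0 := by
        rw [← Finset.mul_sum, Finset.sum_sub_distrib, hx1, hsum1]; ring
      calc (0:ℝ) = ∑ i, -β * (x i - max (y i - β) 0) := h1.symm
      _ ≤ _ := Finset.sum_le_sum fun i _ => key i
    have expand : ∑ i, (x i - y i) ^ 2 =
        (∑ i, (x i - max (y i - β) 0) ^ 2) +
        2 * (∑ i, (x i - max (y i - β) 0) * (max (y i - β) 0 - y i)) +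
        ∑ i, (max (y i - β) 0 - y i) ^ 2 := by
      rw [Finset.mul_sum, ← Finset.sum_add_distrib, ← Finset.sum_add_distrib]
      exact Finset.sum_congr rfl fun i _ => by ring
    have hsq : (0:ℝ) ≤ ∑ i, (x i - max (y i - β) 0) ^ 2 :=
      Finset.sum_nonneg fun i _ => sq_nonneg _
    linarith [expand, hsum2, hsq]
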